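/- Let Q be an n×n real symmetric matrix whose off-diagonal entries are all nonpositive, and let λ_1 ≥ λ_2 ≥ ... ≥ λ_n be its eigenvalues listed in nonincreasing order. Then for every binary vector x ∈ {0,1}^n with exactly p entries equal to 1 (i.e. Σ_{i=1}^n x_i = p), the quadratic form satisfies xᵗ Q x ≤ Σ_{i=1}^p λ_i, the sum of the p largest eigenvalues of Q. -/

import Mathlib

open Matrix
open Finset

lemma card_filter_lt_fin {n p : ℕ} (hpn : p ≤ n) :
    (Finset.univ.filter (fun i : Fin n => (i : ℕ) < p)).card = p := by
  rcases eq_or_lt_of_le hpn with h | h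
  · subst h
    rw [Finset.filter_true_of_mem (fun i _ => i.isLt)]
    simp
  · have : Finset.univ.filter (fun i : Fin n => (i : ℕ) < p) = Finset.Iio (⟨p, h⟩ : Fin n) := by
      ext i; simp [Fin.lt_def]
    rw [this, Fin.card_Iio]

lemma knapsack {n p : ℕ} (lam : Fin n → ℝ) (hlam : Antitone lam)
    (e : Fin n → ℝ) (he0 : ∀ k, 0 ≤ e k) (he1 : ∀ k, e k ≤ 1)
    (hsum : ∑ k, e k = p) :
    ∑ k, lam k * e k ≤ ∑ k ∈ Finset.univ.filter (fun i : Fin n => (i : ℕ) < p), lam k := by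
  rcases Nat.eq_zero_or_pos n with hn | hn
  · subst hn
    simp only [Finset.univ_eq_empty, Finset.filter_empty, Finset.sum_empty] at *
    simp
  have hpn : p ≤ n := by
    have h1 : (p : ℝ) ≤ n := by
      rw [← hsum]
      calc ∑ k, e k ≤ ∑ _k : Fin n, (1:ℝ) := Finset.sum_le_sum fun k _ => he1 k
        _ = n := by simp
    exact_mod_cast h1
  set t : ℝ := lam ⟨min p (n-1), by omega⟩ with ht
  set A := Finset.univ.filter (fun i : Fin n => (i : ℕ) < p) with hA
  set B := Finset.univ.filter (fun i : Fin n => ¬ (i : ℕ) < p) with hB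
  have hsplit : ∑ k ∈ A, e k + ∑ k ∈ B, e k = p := by
    rw [hA, hB, Finset.sum_filter_add_sum_filter_not, hsum]
  have hsplitlam : ∑ k, lam k * e k = ∑ k ∈ A, lam k * e k + ∑ k ∈ B, lam k * e k :=
    (Finset.sum_filter_add_sum_filter_not _ _ _).symm
  have hcard : A.card = p := card_filter_lt_fin hpn
  have e1 : ∑ k ∈ B, lam k * e k ≤ t * ∑ k ∈ B, e k := by
    rw [Finset.mul_sum]
    refine Finset.sum_le_sum fun k hk => ?_
    have hk' : p ≤ (k : ℕ) := by simpa [hB] using hk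
    have : lam k ≤ t := hlam (by simp [Fin.le_def]; omega)
    exact mul_le_mul_of_nonneg_right this (he0 k)
  have e2 : (0:ℝ) ≤ ∑ k ∈ A, (lam k - t) * (1 - e k) := by
    refine Finset.sum_nonneg fun k hk => ?_
    have hk' : (k : ℕ) < p := by simpa [hA] using hk
    have h1 : t ≤ lam k := hlam (by simp [Fin.le_def]; omega)
    have h2 : e k ≤ 1 := he1 k
    nlinarith
  have e3 : ∑ k ∈ A, (lam k - t) * (1 - e k)
      = ∑ k ∈ A, lam k - ∑ k ∈ A, lam k * e k - t * p + t * ∑ k ∈ A, e k := by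
    have : ∀ k ∈ A, (lam k - t) * (1 - e k) = lam k - lam k * e k - t + t * e k := by
      intro k _; ring
    rw [Finset.sum_congr rfl this]
    simp only [Finset.sum_add_distrib, Finset.sum_sub_distrib, Finset.sum_const, Finset.mul_sum,
      hcard, nsmul_eq_mul]
    ring
  rw [hsplitlam]
  have hp' : (p:ℝ) = ∑ k ∈ A, e k + ∑ k ∈ B, e k := hsplit.symm
  have hmul : t * (p:ℝ) = t * ∑ k ∈ A, e k + t * ∑ k ∈ B, e k := by rw [hp']; ring
  linarith [e1, e2, e3, hmul]


/-- For a real symmetric `n × n` matrix `Q` with nonpositive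
off-diagonal entries and eigenvalues `lam 0 ≥ lam 1 ≥ ... ≥ lam (n-1)`
(listed in nonincreasing order, with multiplicity), every binary vector
`x ∈ {0,1}^n` with exactly `p` ones satisfies
`xᵗ Q x ≤ ∑_{k < p} lam k` (the sum of the `p` largest eigenvalues). -/
theorem stmt0 {n : ℕ} (Q : Matrix (Fin n) (Fin n) ℝ) (hQ : Q.IsHermitian)
    (hoff : ∀ i j : Fin n, i ≠ j → Q i j ≤ 0)
    (lam : Fin n → ℝ) (hlam : Antitone lam)
    (σ : Equiv.Perm (Fin n)) (hσ : ∀ i, lam (σ i) = hQ.eigenvalues i)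
    (x : Fin n → ℝ) (hx : ∀ i, x i = 0 ∨ x i = 1)
    (p : ℕ) (hp : ∑ i, x i = p) :
    x ⬝ᵥ Q.mulVec x ≤ ∑ k ∈ Finset.univ.filter (fun i : Fin n => (i : ℕ) < p), lam k := by
  classical
  set V : Matrix (Fin n) (Fin n) ℝ := (hQ.eigenvectorUnitary : Matrix (Fin n) (Fin n) ℝ) with hV
  set ev : Fin n → ℝ := hQ.eigenvalues with hev
  have hx0 : ∀ i, 0 ≤ x i := fun i => by rcases hx i with h | h <;> rw [h] <;> norm_num
  have hx1 : ∀ i, x i ≤ 1 := fun i => by rcases hx i with h | h <;> rw [h] <;> norm_num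
  have hxx : ∀ i, x i * x i = x i := fun i => by rcases hx i with h | h <;> rw [h] <;> ring
  have hQdiag : ∀ i j, Q i j = ∑ k, ev k * V i k * V j k := by
    intro i j
    conv_lhs => rw [hQ.spectral_theorem]
    simp [hV, hev, Matrix.mul_apply, Matrix.diagonal_apply, Finset.sum_mul, conjTranspose_apply,
      mul_comm, mul_assoc, mul_left_comm]
  have hrow : ∀ i, ∑ k, (V i k)^2 = 1 := by
    intro i
    have h := Matrix.mem_unitaryGroup_iff.mp hQ.eigenvectorUnitary.2
    have := congrFun (congrFun h i) i
    simpa [hV, Matrix.mul_apply, conjTranspose_apply, sq] using this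
  have hcol : ∀ k, ∑ i, (V i k)^2 = 1 := by
    intro k
    have h := Matrix.mem_unitaryGroup_iff'.mp hQ.eigenvectorUnitary.2
    have := congrFun (congrFun h k) k
    simpa [hV, Matrix.mul_apply, conjTranspose_apply, sq] using this
  set d : Fin n → ℝ := fun k => ∑ i, x i * (V i k)^2 with hd
  -- Step 1
  have step1 : x ⬝ᵥ Q.mulVec x ≤ ∑ i, x i * Q i i := by
    rw [dotProduct]
    refine Finset.sum_le_sum fun i _ => ?_
    have hmv : Q.mulVec x i = ∑ j, Q i j * x j := rfl
    rw [hmv, Finset.mul_sum]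
    rw [← Finset.add_sum_erase _ (fun j => x i * (Q i j * x j)) (Finset.mem_univ i)]
    have h1 : x i * (Q i i * x i) = x i * Q i i := by
      rw [mul_comm (Q i i) (x i), ← mul_assoc, hxx]
    have h2 : ∑ j ∈ Finset.univ.erase i, x i * (Q i j * x j) ≤ 0 := by
      refine Finset.sum_nonpos fun j hj => ?_
      have hji : j ≠ i := Finset.ne_of_mem_erase hj
      exact mul_nonpos_of_nonneg_of_nonpos (hx0 i)
        (mul_nonpos_of_nonpos_of_nonneg (hoff i j (Ne.symm hji)) (hx0 j))
    linarith
  -- Step 2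
  have step2 : ∑ i, x i * Q i i = ∑ k, ev k * d k := by
    calc ∑ i, x i * Q i i = ∑ i, ∑ k, ev k * (x i * (V i k)^2) := by
          refine Finset.sum_congr rfl fun i _ => ?_
          rw [hQdiag i i, Finset.mul_sum]
          refine Finset.sum_congr rfl fun k _ => ?_
          ring
      _ = ∑ k, ev k * d k := by
          rw [Finset.sum_comm]
          exact Finset.sum_congr rfl fun k _ => (Finset.mul_sum _ _ _).symm
  -- Step 3
  have hd0 : ∀ k, 0 ≤ d k := fun k =>
    Finset.sum_nonneg fun i _ => mul_nonneg (hx0 i) (sq_nonneg _)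
  have hd1 : ∀ k, d k ≤ 1 := by
    intro k
    calc d k ≤ ∑ i, (V i k)^2 := by
          refine Finset.sum_le_sum fun i _ => ?_
          nlinarith [hx1 i, hx0 i, sq_nonneg (V i k)]
      _ = 1 := hcol k
  have hdsum : ∑ k, d k = p := by
    rw [hd]
    rw [Finset.sum_comm]
    calc ∑ i, ∑ k, x i * (V i k)^2 = ∑ i, x i * ∑ k, (V i k)^2 := by
          exact Finset.sum_congr rfl fun i _ => (Finset.mul_sum _ _ _).symm
      _ = ∑ i, x i := by
          refine Finset.sum_congr rfl fun i _ => by rw [hrow i, mul_one]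
      _ = p := hp
  -- Step 4
  have step4 : ∑ k, ev k * d k = ∑ k, lam k * d (σ.symm k) := by
    rw [← Equiv.sum_comp σ (fun k => lam k * d (σ.symm k))]
    refine Finset.sum_congr rfl fun k _ => ?_
    rw [hσ, Equiv.symm_apply_apply]
  have hesum : ∑ k, d (σ.symm k) = p := by
    rw [Equiv.sum_comp σ.symm d]; exact hdsum
  have step5 := knapsack lam hlam (fun k => d (σ.symm k))
    (fun k => hd0 _) (fun k => hd1 _) hesum
  calc x ⬝ᵥ Q.mulVec x ≤ ∑ i, x i * Q i i := step1
    _ = ∑ k, ev k * d k := step2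
    _ = ∑ k, lam k * d (σ.symm k) := step4
    _ ≤ _ := step5
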